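/- Let m ≥ 3 be odd and a, b : F_2^{m-1} → F_2 bent functions. Define f : F_2^{m-1} × F_2 → Z_4 by f(x,y) = 2a(x)(1+y) + 2b(x)y + y, where the bit y and the values a(x), b(x) are lifted to {0,1} ⊂ Z_4. Then f is a generalized bent function: for every v ∈ F_2^m, |Σ_{z ∈ F_2^m} i^{f(z)} (-1)^{⟨v,z⟩}| = 2^{m/2}. -/

import Mathlib

open Finset

def walsh {n : ℕ} (f : (Fin n → ZMod 2) → ZMod 2) (v : Fin n → ZMod 2) : ℤ :=
  ∑ x : Fin n → ZMod 2, (-1 : ℤ) ^ (f x + ∑ i : Fin n, v i * x i).val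

def IsBent {n : ℕ} (f : (Fin n → ZMod 2) → ZMod 2) : Prop :=
  ∀ v, walsh f v = 2 ^ (n / 2) ∨ walsh f v = -(2 ^ (n / 2))

/-- the gbent construction `f(x,y) = 2a(x)(1+y) + 2b(x)y + y` with values in `Z_4` -/
def gfun {m : ℕ} (a b : (Fin (m - 1) → ZMod 2) → ZMod 2)
    (z : (Fin (m - 1) → ZMod 2) × ZMod 2) : ZMod 4 :=
  2 * ((a z.1).val : ZMod 4) * (1 + ((z.2).val : ZMod 4)) +
    2 * ((b z.1).val : ZMod 4) * ((z.2).val : ZMod 4) + ((z.2).val : ZMod 4)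

/-- dot product on `F_2^{m-1} × F_2` -/
def dotp {m : ℕ} (v z : (Fin (m - 1) → ZMod 2) × ZMod 2) : ZMod 2 :=
  (∑ i : Fin (m - 1), v.1 i * z.1 i) + v.2 * z.2

lemma zmod2_sum {M : Type*} [AddCommMonoid M] (g : ZMod 2 → M) :
    ∑ y : ZMod 2, g y = g 0 + g 1 :=
  Fin.sum_univ_two g

lemma g0val : ∀ c d : ZMod 2,
    (2 * ((c.val : ZMod 4)) * (1 + (((0 : ZMod 2)).val : ZMod 4)) +
      2 * ((d.val : ZMod 4)) * (((0 : ZMod 2)).val : ZMod 4) +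
      (((0 : ZMod 2)).val : ZMod 4)).val = 2 * c.val := by decide

lemma g1val : ∀ c d : ZMod 2,
    (2 * ((c.val : ZMod 4)) * (1 + (((1 : ZMod 2)).val : ZMod 4)) +
      2 * ((d.val : ZMod 4)) * (((1 : ZMod 2)).val : ZMod 4) +
      (((1 : ZMod 2)).val : ZMod 4)).val = 2 * d.val + 1 := by decide

lemma neg1_add (s t : ZMod 2) :
    ((-1 : ℂ)) ^ ((s + t).val) = (-1) ^ s.val * (-1) ^ t.val := by
  have h2 : ∀ x : ZMod 2, x = 0 ∨ x = 1 := by decide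
  rcases h2 s with rfl | rfl <;> rcases h2 t with rfl | rfl <;>
    norm_num [show ZMod.val (2 : ZMod 2) = 0 from rfl, show ZMod.val (1 : ZMod 2) = 1 from rfl,
      show (1 + 1 : ZMod 2) = 0 from rfl]

lemma key (c d s t : ZMod 2) :
    Complex.I ^ (2 * c.val) * (-1 : ℂ) ^ ((s + t * 0).val) +
      Complex.I ^ (2 * d.val + 1) * (-1 : ℂ) ^ ((s + t * 1).val) =
    (((-1 : ℤ) ^ ((c + s).val) : ℤ) : ℂ) +
      Complex.I * (-1 : ℂ) ^ t.val * (((-1 : ℤ) ^ ((d + s).val) : ℤ) : ℂ) := by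
  have h2 : ∀ x : ZMod 2, x = 0 ∨ x = 1 := by decide
  rcases h2 c with rfl | rfl <;> rcases h2 d with rfl | rfl <;> rcases h2 s with rfl | rfl <;>
    rcases h2 t with rfl | rfl <;>
    norm_num [show ZMod.val (2 : ZMod 2) = 0 from rfl, show ZMod.val (1 : ZMod 2) = 1 from rfl,
      show (1 + 1 : ZMod 2) = 0 from rfl,
      pow_succ, pow_mul, Complex.I_mul_I, Complex.I_sq]

theorem gbent_of_bent_pair {m : ℕ} (hm : Odd m) (hm3 : 3 ≤ m)
    (a b : (Fin (m - 1) → ZMod 2) → ZMod 2) (ha : IsBent a) (hb : IsBent b) :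
    ∀ v : (Fin (m - 1) → ZMod 2) × ZMod 2,
      ‖∑ z : (Fin (m - 1) → ZMod 2) × ZMod 2,
          Complex.I ^ (gfun a b z).val * (-1 : ℂ) ^ (dotp v z).val‖
        = Real.sqrt (2 ^ m) := by
  intro v
  obtain ⟨k, hk⟩ := hm
  have hk1 : m - 1 = 2 * k := by omega
  have hk2 : (m - 1) / 2 = k := by omega
  have hsum : (∑ z : (Fin (m - 1) → ZMod 2) × ZMod 2,
      Complex.I ^ (gfun a b z).val * (-1 : ℂ) ^ (dotp v z).val) =
      ((walsh a v.1 : ℤ) : ℂ) +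
        Complex.I * (-1 : ℂ) ^ (v.2.val) * ((walsh b v.1 : ℤ) : ℂ) := by
    rw [Fintype.sum_prod_type]
    have hx : ∀ x : Fin (m - 1) → ZMod 2,
        (∑ y : ZMod 2, Complex.I ^ (gfun a b (x, y)).val * (-1 : ℂ) ^ (dotp v (x, y)).val) =
        (((-1 : ℤ) ^ ((a x + ∑ i, v.1 i * x i).val) : ℤ) : ℂ) +
          Complex.I * (-1 : ℂ) ^ (v.2.val) *
            (((-1 : ℤ) ^ ((b x + ∑ i, v.1 i * x i).val) : ℤ) : ℂ) := by
      intro x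
      rw [zmod2_sum]
      simp only [gfun, dotp]
      rw [g0val (a x) (b x), g1val (a x) (b x)]
      exact key (a x) (b x) (∑ i, v.1 i * x i) v.2
    rw [Finset.sum_congr rfl (fun x _ => hx x), Finset.sum_add_distrib]
    simp only [walsh]
    push_cast
    rw [← Finset.mul_sum]
  rw [hsum]
  set A : ℝ := ((walsh a v.1 : ℤ) : ℝ) with hAdef
  set B : ℝ := (-1 : ℝ) ^ (v.2.val) * ((walsh b v.1 : ℤ) : ℝ) with hBdef
  have hAA : A ^ 2 = 2 ^ (2 * k) := by
    rcases ha v.1 with h | h <;> rw [hAdef, h, hk2] <;> push_cast <;> ring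
  have hBB : B ^ 2 = 2 ^ (2 * k) := by
    have h1 : ((-1 : ℝ) ^ (v.2.val)) ^ 2 = 1 := by
      rw [← pow_mul, mul_comm, pow_mul]; norm_num
    rcases hb v.1 with h | h <;> rw [hBdef, mul_pow, h1, one_mul, h, hk2] <;>
      push_cast <;> ring
  have hexpr : ((walsh a v.1 : ℤ) : ℂ) +
      Complex.I * (-1 : ℂ) ^ (v.2.val) * ((walsh b v.1 : ℤ) : ℂ) =
      (A : ℂ) + (B : ℂ) * Complex.I := by
    rw [hAdef, hBdef]; push_cast; ring
  rw [hexpr, Complex.norm_add_mul_I]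
  congr 1
  rw [hAA, hBB, hk]
  ring
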